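/- Let p be an odd prime, ℓ ≠ 2, p a prime such that p generates (ℤ/ℓ^bℤ)^× and (ℤ/2ℓ^bℤ)^× for all b ≥ 1, and let r ≥ 1. Then 2ℓ^r divides p^a + 1 for some a ≥ 1 (i.e., 2ℓ^r is supersingular), and I_p(2ℓ^r) := ∑_{e | 2ℓ^r, e>1} φ(e)/o_p(e) equals 2r + 1. -/

import Mathlib

/-- `I_q(D) = ∑_{e ∣ D, e > 1} φ(e) / o_q(e)`, where `o_q(e)` is the multiplicative
order of `q` modulo `e` (the term `e = 1` contributes `0`). -/
noncomputable def Iq (q D : ℕ) : ℝ :=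
  ∑ e ∈ D.divisors.filter (fun e => 1 < e),
    (Nat.totient e : ℝ) / (orderOf (q : ZMod e) : ℝ)

theorem Iq_two_ell_pow (p ℓ : ℕ) (hp : p.Prime) (hpodd : Odd p)
    (hl : ℓ.Prime) (hlodd : Odd ℓ) (hlp : ℓ ≠ p)
    (hgen : ∀ b : ℕ, 1 ≤ b →
      orderOf ((p : ZMod (ℓ ^ b))) = Nat.totient (ℓ ^ b) ∧
      orderOf ((p : ZMod (2 * ℓ ^ b))) = Nat.totient (2 * ℓ ^ b))
    (r : ℕ) (hr : 1 ≤ r) :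
    (∃ a : ℕ, 1 ≤ a ∧ (2 * ℓ ^ r) ∣ p ^ a + 1) ∧
    Iq p (2 * ℓ ^ r) = 2 * (r : ℝ) + 1 := by
  have hl3 : 3 ≤ ℓ := by
    have h2 := hl.two_le
    have ho := Nat.odd_iff.mp hlodd
    omega
  have hlr : 3 ≤ ℓ ^ r := le_trans hl3 (Nat.le_self_pow (by omega) ℓ)
  have hm : 6 ≤ 2 * ℓ ^ r := by omega
  have hmne : 2 * ℓ ^ r ≠ 0 := by omega
  haveI : NeZero (2 * ℓ ^ r) := ⟨hmne⟩
  -- coprimality of p with 2 * ℓ ^ r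
  have hp2 : Nat.Coprime p 2 := Nat.coprime_comm.mp
    (Nat.prime_two.coprime_iff_not_dvd.mpr (by have := Nat.odd_iff.mp hpodd; omega))
  have hpl : Nat.Coprime p ℓ := (Nat.coprime_primes hp hl).mpr (fun h => hlp h.symm)
  have hcop : Nat.Coprime p (2 * ℓ ^ r) := Nat.Coprime.mul_right hp2 (hpl.pow_right r)
  -- Part 1 : existence of a
  have hord := (hgen r hr).2
  constructor
  · set u : (ZMod (2 * ℓ ^ r))ˣ := ZMod.unitOfCoprime p hcop with hu
    have hcu : (u : ZMod (2 * ℓ ^ r)) = (p : ZMod (2 * ℓ ^ r)) := ZMod.coe_unitOfCoprime p hcop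
    have hordu : orderOf u = Fintype.card (ZMod (2 * ℓ ^ r))ˣ := by
      rw [← orderOf_units, hcu, hord, ZMod.card_units_eq_totient]
    have htop : ∀ x : (ZMod (2 * ℓ ^ r))ˣ, x ∈ Subgroup.zpowers u := by
      have : Subgroup.zpowers u = ⊤ := by
        apply Subgroup.eq_top_of_card_eq
        rw [Nat.card_zpowers, hordu, Nat.card_eq_fintype_card]
      intro x; rw [this]; exact Subgroup.mem_top x
    obtain ⟨a, ha⟩ := (Submonoid.mem_powers_iff _ _).mp ((mem_powers_iff_mem_zpowers).mpr (htop (-1)))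
    have ha' : (p : ZMod (2 * ℓ ^ r)) ^ a = -1 := by
      have := congrArg (Units.coeHom (ZMod (2 * ℓ ^ r))) ha
      simpa [hcu] using this
    have ha1 : 1 ≤ a := by
      by_contra h
      have : a = 0 := by omega
      subst this
      simp only [pow_zero] at ha'
      have h2 : ((2 : ℕ) : ZMod (2 * ℓ ^ r)) = 0 := by
        push_cast; linear_combination ha'
      rw [ZMod.natCast_eq_zero_iff] at h2
      exact absurd (Nat.le_of_dvd two_pos h2) (by omega)
    refine ⟨a, ha1, ?_⟩
    rw [← ZMod.natCast_eq_zero_iff]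
    push_cast
    rw [ha']; ring
  -- Part 2 : the sum
  · -- each term equals 1
    have hterm : ∀ e ∈ (2 * ℓ ^ r).divisors.filter (fun e => 1 < e),
        (Nat.totient e : ℝ) / (orderOf (p : ZMod e) : ℝ) = 1 := by
      intro e he
      rw [Finset.mem_filter, Nat.mem_divisors] at he
      obtain ⟨⟨hdvd, _⟩, he1⟩ := he
      have hordeq : orderOf (p : ZMod e) = Nat.totient e := by
        by_cases h2e : 2 ∣ e
        · obtain ⟨f, rfl⟩ := h2e
          have hf : f ∣ ℓ ^ r := (mul_dvd_mul_iff_left (two_ne_zero)).mp hdvd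
          obtain ⟨b, hb, rfl⟩ := (Nat.dvd_prime_pow hl).mp hf
          rcases Nat.eq_zero_or_pos b with rfl | hb1
          · -- e = 2
            simp only [pow_zero, mul_one]
            have : (p : ZMod 2) = 1 := by
              rw [← ZMod.natCast_mod, Nat.odd_iff.mp hpodd, Nat.cast_one]
            show orderOf (p : ZMod 2) = Nat.totient 2
            rw [this, orderOf_one]
            decide
          · exact (hgen b hb1).2
        · have hcop2 : Nat.Coprime e 2 := Nat.coprime_comm.mp
            (Nat.prime_two.coprime_iff_not_dvd.mpr h2e)
          have hf : e ∣ ℓ ^ r := (Nat.Coprime.dvd_of_dvd_mul_left hcop2 hdvd)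
          obtain ⟨b, hb, rfl⟩ := (Nat.dvd_prime_pow hl).mp hf
          have hb1 : 1 ≤ b := by
            rcases Nat.eq_zero_or_pos b with rfl | h; · simp at he1
            · exact h
          exact (hgen b hb1).1
      rw [hordeq]
      have : (0:ℝ) < Nat.totient e := by
        exact_mod_cast Nat.totient_pos.mpr (by omega)
      field_simp
    rw [Iq, Finset.sum_congr rfl hterm, Finset.sum_const, nsmul_eq_mul, mul_one]
    -- card computation
    have hfilter : (2 * ℓ ^ r).divisors.filter (fun e => 1 < e) =
        (2 * ℓ ^ r).divisors.erase 1 := by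
      ext e
      simp only [Finset.mem_filter, Finset.mem_erase]
      constructor
      · rintro ⟨h1, h2⟩; exact ⟨by omega, h1⟩
      · rintro ⟨h1, h2⟩
        refine ⟨h2, ?_⟩
        have := Nat.pos_of_mem_divisors h2
        omega
    have hcard2 : (2 : ℕ).divisors.card = 2 := by decide
    have hcardl : (ℓ ^ r).divisors.card = r + 1 := by
      rw [Nat.divisors_prime_pow hl, Finset.card_map, Finset.card_range]
    have hcard : (2 * ℓ ^ r).divisors.card = 2 * (r + 1) := by
      rw [Nat.Coprime.card_divisors_mul (Nat.Coprime.pow_right r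
        (Nat.prime_two.coprime_iff_not_dvd.mpr (by have := Nat.odd_iff.mp hlodd; omega))), hcard2, hcardl]
    rw [hfilter, Finset.card_erase_of_mem (Nat.one_mem_divisors.mpr hmne), hcard]
    push_cast [show 2 * (r + 1) - 1 = 2 * r + 1 from by omega]
    ring
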